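/- (Corollary 3.1) sup_{q ∈ M(μ,σ)} ∫ γ q = μ + σσ₀, and the supremum is attained uniquely (up to a.e. equality) at the quantile function q(u) = μ + (σ/σ₀)(γ(u) − 1). -/
import Mathlib


open MeasureTheory Set Filter

noncomputable section

/-- Integral over the interval (0,1) with Lebesgue measure. -/
def intI (f : ℝ → ℝ) : ℝ := ∫ u in Ioo (0:ℝ) 1, f u

/-- Square integrability on (0,1). -/
def SqInt (f : ℝ → ℝ) : Prop :=
  IntegrableOn f (Ioo (0:ℝ) 1) volume ∧ IntegrableOn (fun u => f u ^ 2) (Ioo (0:ℝ) 1) volume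

/-- A quantile function: nondecreasing and square-integrable on (0,1). -/
def IsQuantile (q : ℝ → ℝ) : Prop := MonotoneOn q (Ioo (0:ℝ) 1) ∧ SqInt q

/-- Membership in `M(μ,σ)` : quantile function with prescribed first two moments. -/
def MemM (μ σ : ℝ) (q : ℝ → ℝ) : Prop :=
  IsQuantile q ∧ intI q = μ ∧ intI (fun u => q u ^ 2) = μ ^ 2 + σ ^ 2

/-- Squared Wasserstein distance between (quantile) functions on (0,1). -/
def W2 (p q : ℝ → ℝ) : ℝ := intI (fun u => (p u - q u) ^ 2)

/-- Almost-everywhere equality on (0,1). -/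
def AeEqI (f g : ℝ → ℝ) : Prop := f =ᵐ[(volume : Measure ℝ).restrict (Ioo (0:ℝ) 1)] g

/-- The penalized objective `J_δ(q) = ∫ γ q − δ d²(q_F, q)`. -/
def Jpen (γ qF : ℝ → ℝ) (δ : ℝ) (q : ℝ → ℝ) : ℝ :=
  intI (fun u => γ u * q u) - δ * W2 qF q

def nuI : Measure ℝ := (volume : Measure ℝ).restrict (Ioo (0:ℝ) 1)

instance : IsProbabilityMeasure nuI :=
  ⟨by simp [nuI, Real.volume_Ioo]⟩

lemma intI_eq (f : ℝ → ℝ) : intI f = ∫ u, f u ∂nuI := rfl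

lemma integrable_mul' {f g : ℝ → ℝ} (hf : AEStronglyMeasurable f nuI)
    (hg : AEStronglyMeasurable g nuI)
    (hf2 : Integrable (fun u => f u ^ 2) nuI) (hg2 : Integrable (fun u => g u ^ 2) nuI) :
    Integrable (fun u => f u * g u) nuI := by
  refine Integrable.mono' ((hf2.add hg2).div_const 2) (hf.mul hg) (ae_of_all _ fun u => ?_)
  have h := sq_nonneg (|f u| - |g u|)
  rw [Real.norm_eq_abs, abs_mul]
  have h1 : |f u| ^ 2 = f u ^ 2 := sq_abs _
  have h2 : |g u| ^ 2 = g u ^ 2 := sq_abs _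
  simp only [Pi.add_apply]
  nlinarith

lemma expand6 {f1 f2 f3 f4 f5 : ℝ → ℝ}
    (h1 : Integrable f1 nuI) (h2 : Integrable f2 nuI) (h3 : Integrable f3 nuI)
    (h4 : Integrable f4 nuI) (h5 : Integrable f5 nuI) (a1 a2 a3 a4 a5 e : ℝ) :
    ∫ u, (a1 * f1 u + a2 * f2 u + a3 * f3 u + a4 * f4 u + a5 * f5 u + e) ∂nuI =
      a1 * (∫ u, f1 u ∂nuI) + a2 * (∫ u, f2 u ∂nuI) + a3 * (∫ u, f3 u ∂nuI) +
      a4 * (∫ u, f4 u ∂nuI) + a5 * (∫ u, f5 u ∂nuI) + e := by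
  have i1 := h1.const_mul a1
  have i2 := h2.const_mul a2
  have i3 := h3.const_mul a3
  have i4 := h4.const_mul a4
  have i5 := h5.const_mul a5
  have j2 : Integrable (fun u => a1 * f1 u + a2 * f2 u) nuI := i1.add i2
  have j3 : Integrable (fun u => a1 * f1 u + a2 * f2 u + a3 * f3 u) nuI := j2.add i3
  have j4 : Integrable (fun u => a1 * f1 u + a2 * f2 u + a3 * f3 u + a4 * f4 u) nuI := j3.add i4
  have j5 : Integrable (fun u => a1 * f1 u + a2 * f2 u + a3 * f3 u + a4 * f4 u + a5 * f5 u) nuI :=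
    j4.add i5
  rw [integral_add j5 (integrable_const e), integral_add j4 i5, integral_add j3 i4,
    integral_add j2 i3, integral_add i1 i2,
    integral_const_mul, integral_const_mul, integral_const_mul, integral_const_mul,
    integral_const_mul, integral_const]
  simp

lemma expand2 {f1 f2 : ℝ → ℝ}
    (h1 : Integrable f1 nuI) (h2 : Integrable f2 nuI) (a1 a2 e : ℝ) :
    ∫ u, (a1 * f1 u + a2 * f2 u + e) ∂nuI =
      a1 * (∫ u, f1 u ∂nuI) + a2 * (∫ u, f2 u ∂nuI) + e := by
  have i1 := h1.const_mul a1
  have i2 := h2.const_mul a2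
  have j2 : Integrable (fun u => a1 * f1 u + a2 * f2 u) nuI := i1.add i2
  rw [integral_add j2 (integrable_const e), integral_add i1 i2, integral_const_mul,
    integral_const_mul, integral_const]
  simp

theorem statement2
    (μ σ : ℝ) (hσpos : 0 < σ)
    (γ : ℝ → ℝ) (hγmono : MonotoneOn γ (Ioo (0:ℝ) 1)) (hγsq : SqInt γ)
    (hγ1 : intI γ = 1)
    (σ0 : ℝ) (hσ0 : σ0 = Real.sqrt (intI (fun u => γ u ^ 2) - 1)) (hσ0pos : 0 < σ0) :
    MemM μ σ (fun u => μ + σ / σ0 * (γ u - 1)) ∧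
    ∀ q : ℝ → ℝ, MemM μ σ q →
      intI (fun u => γ u * q u) ≤ μ + σ * σ0 ∧
      (intI (fun u => γ u * q u) = μ + σ * σ0 ↔
        AeEqI q (fun u => μ + σ / σ0 * (γ u - 1))) := by
  have hσ0ne : σ0 ≠ 0 := ne_of_gt hσ0pos
  have hg2pos : 0 < intI (fun u => γ u ^ 2) - 1 := Real.sqrt_pos.mp (hσ0 ▸ hσ0pos)
  have hσ0sq : σ0 ^ 2 = intI (fun u => γ u ^ 2) - 1 := by
    rw [hσ0, Real.sq_sqrt hg2pos.le]
  have iγ : Integrable γ nuI := hγsq.1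
  have iγ2 : Integrable (fun u => γ u ^ 2) nuI := hγsq.2
  have hIγ : ∫ u, γ u ∂nuI = 1 := hγ1
  have hIγ2 : ∫ u, γ u ^ 2 ∂nuI = 1 + σ0 ^ 2 := by
    have : intI (fun u => γ u ^ 2) = 1 + σ0 ^ 2 := by rw [hσ0sq]; ring
    exact this
  have hcpos : 0 < σ / σ0 := div_pos hσpos hσ0pos
  -- integrability of q*
  have iqs : Integrable (fun u => μ + σ / σ0 * (γ u - 1)) nuI := by
    have h : (fun u => μ + σ / σ0 * (γ u - 1))
        = fun u => σ / σ0 * γ u + (μ - σ / σ0) := by funext u; ring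
    rw [h]
    exact (iγ.const_mul _).add (integrable_const _)
  have iqs2 : Integrable (fun u => (μ + σ / σ0 * (γ u - 1)) ^ 2) nuI := by
    have h : (fun u => (μ + σ / σ0 * (γ u - 1)) ^ 2)
        = fun u => (σ / σ0) ^ 2 * γ u ^ 2 + (2 * (σ / σ0) * (μ - σ / σ0)) * γ u
            + (μ - σ / σ0) ^ 2 := by funext u; ring
    rw [h]
    exact ((iγ2.const_mul _).add (iγ.const_mul _)).add (integrable_const _)
  have hmem : MemM μ σ (fun u => μ + σ / σ0 * (γ u - 1)) := by
    refine ⟨⟨?_, iqs, iqs2⟩, ?_, ?_⟩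
    · intro a ha b hb hab
      have := hγmono ha hb hab
      nlinarith
    · have h : (fun u => μ + σ / σ0 * (γ u - 1))
          = fun u => σ / σ0 * γ u + 0 * γ u + (μ - σ / σ0) := by funext u; ring
      show ∫ u, (μ + σ / σ0 * (γ u - 1)) ∂nuI = μ
      rw [h, expand2 iγ iγ, hIγ]
      ring
    · have h : (fun u => (μ + σ / σ0 * (γ u - 1)) ^ 2)
          = fun u => (σ / σ0) ^ 2 * γ u ^ 2 + (2 * (σ / σ0) * (μ - σ / σ0)) * γ u
              + (μ - σ / σ0) ^ 2 := by funext u; ring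
      show ∫ u, (μ + σ / σ0 * (γ u - 1)) ^ 2 ∂nuI = μ ^ 2 + σ ^ 2
      rw [h, expand2 iγ2 iγ, hIγ2, hIγ]
      field_simp
      ring
  refine ⟨hmem, fun q hq => ?_⟩
  obtain ⟨⟨hqmono, iqOn, iq2On⟩, hIq, hIq2⟩ := hq
  have iq : Integrable q nuI := iqOn
  have iq2 : Integrable (fun u => q u ^ 2) nuI := iq2On
  have iγq : Integrable (fun u => γ u * q u) nuI :=
    integrable_mul' iγ.aestronglyMeasurable iq.aestronglyMeasurable iγ2 iq2
  have hIq' : ∫ u, q u ∂nuI = μ := hIq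
  have hIq2' : ∫ u, q u ^ 2 ∂nuI = μ ^ 2 + σ ^ 2 := hIq2
  set J := intI (fun u => γ u * q u) with hJ
  have hIγq : ∫ u, γ u * q u ∂nuI = J := hJ.symm
  have hFexp : (fun u => (σ * (γ u - 1) - σ0 * (q u - μ)) ^ 2)
      = fun u => σ ^ 2 * γ u ^ 2 + σ0 ^ 2 * q u ^ 2 + (-(2 * σ * σ0)) * (γ u * q u)
          + (2 * σ * (σ0 * μ - σ)) * γ u + (-(2 * σ0 * (σ0 * μ - σ))) * q u
          + (σ0 * μ - σ) ^ 2 := by funext u; ring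
  have iF2 : Integrable (fun u => (σ * (γ u - 1) - σ0 * (q u - μ)) ^ 2) nuI := by
    rw [hFexp]
    exact (((((iγ2.const_mul _).add (iq2.const_mul _)).add (iγq.const_mul _)).add
      (iγ.const_mul _)).add (iq.const_mul _)).add (integrable_const _)
  have hF2val : ∫ u, (σ * (γ u - 1) - σ0 * (q u - μ)) ^ 2 ∂nuI
      = 2 * σ * σ0 * (μ + σ * σ0 - J) := by
    rw [hFexp, expand6 iγ2 iq2 iγq iγ iq, hIγ2, hIq2', hIγq, hIγ, hIq']
    ring
  have hF2nonneg : 0 ≤ ∫ u, (σ * (γ u - 1) - σ0 * (q u - μ)) ^ 2 ∂nuI :=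
    integral_nonneg fun u => sq_nonneg _
  have hle : J ≤ μ + σ * σ0 := by
    rw [hF2val] at hF2nonneg
    nlinarith [mul_pos hσpos hσ0pos]
  refine ⟨hle, ?_, ?_⟩
  · intro heq
    have hzero : ∫ u, (σ * (γ u - 1) - σ0 * (q u - μ)) ^ 2 ∂nuI = 0 := by
      rw [hF2val, heq]; ring
    have hae := (integral_eq_zero_iff_of_nonneg (fun u => sq_nonneg _) iF2).mp hzero
    have : q =ᵐ[nuI] fun u => μ + σ / σ0 * (γ u - 1) := by
      filter_upwards [hae] with u hu
      have hu0 : σ * (γ u - 1) - σ0 * (q u - μ) = 0 := by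
        have : (σ * (γ u - 1) - σ0 * (q u - μ)) ^ 2 = 0 := hu
        exact pow_eq_zero_iff two_ne_zero |>.mp this
      field_simp
      linarith
    exact this
  · intro hae
    have hae' : q =ᵐ[nuI] fun u => μ + σ / σ0 * (γ u - 1) := hae
    have hcongr : (fun u => γ u * q u)
        =ᵐ[nuI] fun u => γ u * (μ + σ / σ0 * (γ u - 1)) := by
      filter_upwards [hae'] with u hu
      rw [hu]
    have h : (fun u => γ u * (μ + σ / σ0 * (γ u - 1)))
        = fun u => (σ / σ0) * γ u ^ 2 + (μ - σ / σ0) * γ u + 0 := by funext u; ring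
    have : J = μ + σ * σ0 := by
      rw [hJ, intI_eq, integral_congr_ae hcongr, h, expand2 iγ2 iγ, hIγ2, hIγ]
      field_simp
      ring
    exact this
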